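/- Let ξ₁,...,ξₙ be independent centered random variables with ξᵢ ≤ B a.s. and E[|ξᵢ|³] ≤ B·E[ξᵢ²] for some B > 0 and all i. Then for all λ ≥ 0, the tilted variance σ̄²(λ) = ∑ᵢ ( E[ξᵢ²e^{λξᵢ}]/E[e^{λξᵢ}] − (E[ξᵢe^{λξᵢ}]/E[e^{λξᵢ}])² ) satisfies σ̄²(λ) ≥ max(1 − Bλ, 0)·e^{−B²λ²}·σ², where σ² = ∑ᵢ E[ξᵢ²]. -/

import Mathlib

open MeasureTheory ProbabilityTheory Real

lemma aux_quad_exp (x : ℝ) (hx : x ≤ 0) : Real.exp x ≤ 1 + x + x ^ 2 / 2 := by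
  have hder : ∀ y : ℝ, HasDerivAt (fun t : ℝ => 1 + t + t ^ 2 / 2 - Real.exp t)
      (1 + y - Real.exp y) y := by
    intro y
    have h1 : HasDerivAt (fun t : ℝ => 1 + t) 1 y := (hasDerivAt_id y).const_add 1
    have h2 : HasDerivAt (fun t : ℝ => t ^ 2 / 2) ((2 : ℕ) * y ^ 1 / 2) y :=
      (hasDerivAt_pow 2 y).div_const 2
    have h3 : HasDerivAt Real.exp (Real.exp y) y := Real.hasDerivAt_exp y
    have := (h1.add h2).sub h3
    refine this.congr_deriv ?_
    push_cast
    ring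
  have hanti : Antitone (fun t : ℝ => 1 + t + t ^ 2 / 2 - Real.exp t) := by
    apply antitone_of_deriv_nonpos
    · exact fun y => (hder y).differentiableAt
    · intro y
      rw [(hder y).deriv]
      nlinarith [Real.add_one_le_exp y]
  have := hanti hx
  simp only [Real.exp_zero] at this
  linarith

lemma aux_exp_cubic (x : ℝ) (hx : x ≤ 1) :
    Real.exp x - 1 - x ≤ x ^ 2 / 2 + (2 / 9) * (max x 0) ^ 3 := by
  rcases le_or_gt x 0 with h | h
  · rw [max_eq_right h]
    have := aux_quad_exp x h
    norm_num
    linarith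
  · rw [max_eq_left h.le]
    have hb := Real.exp_bound' h.le hx (n := 3) (by norm_num)
    simp [Finset.sum_range_succ, Nat.factorial] at hb
    nlinarith [hb]

lemma aux_F_le_one (u : ℝ) (hu : 0 ≤ u) :
    (1 - u) * Real.exp (u + (4 / 9) * u ^ 3) ≤ 1 := by
  have hder : ∀ y : ℝ, HasDerivAt (fun t : ℝ => (1 - t) * Real.exp (t + (4 / 9) * t ^ 3))
      ((-1) * Real.exp (y + (4 / 9) * y ^ 3)
        + (1 - y) * (Real.exp (y + (4 / 9) * y ^ 3) * (1 + (4 / 3) * y ^ 2))) y := by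
    intro y
    have hP : HasDerivAt (fun t : ℝ => t + (4 / 9) * t ^ 3) (1 + (4 / 3) * y ^ 2) y := by
      have h1 : HasDerivAt (fun t : ℝ => t) 1 y := hasDerivAt_id y
      have h2 : HasDerivAt (fun t : ℝ => (4 / 9) * t ^ 3) ((4 / 9) * ((3 : ℕ) * y ^ 2)) y :=
        (hasDerivAt_pow 3 y).const_mul (4 / 9)
      have := h1.add h2
      refine this.congr_deriv ?_
      push_cast
      ring
    have hE : HasDerivAt (fun t : ℝ => Real.exp (t + (4 / 9) * t ^ 3))
        (Real.exp (y + (4 / 9) * y ^ 3) * (1 + (4 / 3) * y ^ 2)) y := hP.exp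
    have hL : HasDerivAt (fun t : ℝ => 1 - t) (-1) y := (hasDerivAt_id y).const_sub 1
    exact hL.mul hE
  have hanti : AntitoneOn (fun t : ℝ => (1 - t) * Real.exp (t + (4 / 9) * t ^ 3)) (Set.Ici 0) := by
    apply antitoneOn_of_deriv_nonpos (convex_Ici 0)
    · exact (Differentiable.continuous (fun y => (hder y).differentiableAt)).continuousOn
    · exact fun y _ => ((hder y).differentiableAt).differentiableWithinAt
    · intro y hy
      rw [interior_Ici] at hy
      rw [(hder y).deriv]
      have hE := Real.exp_pos (y + (4 / 9) * y ^ 3)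
      have hq : (1 - y) * (1 + (4 / 3) * y ^ 2) ≤ 1 := by
        nlinarith [mul_nonneg (le_of_lt hy) (sq_nonneg (y - 1 / 2))]
      nlinarith [mul_le_mul_of_nonneg_right hq hE.le]
  have h0 : (0 : ℝ) ∈ Set.Ici (0 : ℝ) := Set.self_mem_Ici
  have hu' : u ∈ Set.Ici (0 : ℝ) := hu
  have := hanti h0 hu' hu
  simpa using this

lemma aux_s_le_B_sq {Ω : Type*} [MeasurableSpace Ω] (μ : Measure Ω) [IsProbabilityMeasure μ]
    (X : Ω → ℝ) (B : ℝ) (hB : 0 < B)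
    (hint : Integrable X μ)
    (hint2 : Integrable (fun ω => X ω ^ 2) μ) (hint3 : Integrable (fun ω => |X ω| ^ 3) μ)
    (hmom3 : ∫ ω, |X ω| ^ 3 ∂μ ≤ B * ∫ ω, X ω ^ 2 ∂μ) :
    ∫ ω, X ω ^ 2 ∂μ ≤ B ^ 2 := by
  set s := ∫ ω, X ω ^ 2 ∂μ with hs_def
  set m1 := ∫ ω, |X ω| ∂μ with hm1_def
  set m3 := ∫ ω, |X ω| ^ 3 ∂μ with hm3_def
  have hs0 : 0 ≤ s := integral_nonneg fun ω => sq_nonneg _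
  have hm1_0 : 0 ≤ m1 := integral_nonneg fun ω => abs_nonneg _
  have iabs : Integrable (fun ω => |X ω|) μ := hint.abs
  have iT1 : Integrable (fun p : Ω × Ω => X p.1 ^ 2 * X p.2 ^ 2) (μ.prod μ) :=
    hint2.mul_prod hint2
  have iT2a : Integrable (fun p : Ω × Ω => |X p.1| ^ 3 * |X p.2|) (μ.prod μ) :=
    hint3.mul_prod iabs
  have iT2b : Integrable (fun p : Ω × Ω => |X p.1| * |X p.2| ^ 3) (μ.prod μ) :=
    iabs.mul_prod hint3
  have eT1 : ∫ p : Ω × Ω, X p.1 ^ 2 * X p.2 ^ 2 ∂(μ.prod μ) = s * s :=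
    integral_prod_mul (fun ω => X ω ^ 2) (fun ω => X ω ^ 2)
  have eT2a : ∫ p : Ω × Ω, |X p.1| ^ 3 * |X p.2| ∂(μ.prod μ) = m3 * m1 :=
    integral_prod_mul (fun ω => |X ω| ^ 3) (fun ω => |X ω|)
  have eT2b : ∫ p : Ω × Ω, |X p.1| * |X p.2| ^ 3 ∂(μ.prod μ) = m1 * m3 :=
    integral_prod_mul (fun ω => |X ω|) (fun ω => |X ω| ^ 3)
  have c1 : s * s ≤ (m3 * m1 + m1 * m3) / 2 := by
    have hmono : ∫ p : Ω × Ω, X p.1 ^ 2 * X p.2 ^ 2 ∂(μ.prod μ)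
        ≤ ∫ p : Ω × Ω, (|X p.1| ^ 3 * |X p.2| + |X p.1| * |X p.2| ^ 3) / 2 ∂(μ.prod μ) := by
      apply integral_mono iT1 ((iT2a.add iT2b).div_const 2)
      intro p
      have h1 : X p.1 ^ 2 = |X p.1| ^ 2 := (sq_abs _).symm
      have h2 : X p.2 ^ 2 = |X p.2| ^ 2 := (sq_abs _).symm
      simp only [Pi.add_apply]
      rw [h1, h2]
      nlinarith [mul_nonneg (mul_nonneg (abs_nonneg (X p.1)) (abs_nonneg (X p.2)))
        (sq_nonneg (|X p.1| - |X p.2|)), abs_nonneg (X p.1), abs_nonneg (X p.2)]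
    rw [eT1] at hmono
    rwa [integral_div, integral_add iT2a iT2b, eT2a, eT2b] at hmono
  have c2 : m1 * m1 ≤ s := by
    have e2a : ∫ p : Ω × Ω, X p.1 ^ 2 * (1 : ℝ) ∂(μ.prod μ) = s := by
      have := integral_prod_mul (μ := μ) (ν := μ) (fun ω => X ω ^ 2) (fun _ => (1 : ℝ))
      simpa using this
    have e2b : ∫ p : Ω × Ω, (1 : ℝ) * X p.2 ^ 2 ∂(μ.prod μ) = s := by
      have := integral_prod_mul (μ := μ) (ν := μ) (fun _ => (1 : ℝ)) (fun ω => X ω ^ 2)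
      simpa using this
    have hmono : ∫ p : Ω × Ω, |X p.1| * |X p.2| ∂(μ.prod μ)
        ≤ ∫ p : Ω × Ω, (X p.1 ^ 2 * (1 : ℝ) + (1 : ℝ) * X p.2 ^ 2) / 2 ∂(μ.prod μ) := by
      apply integral_mono (iabs.mul_prod iabs)
        (((hint2.mul_prod (integrable_const 1)).add ((integrable_const 1).mul_prod hint2)).div_const 2)
      intro p
      simp only [Pi.add_apply]
      nlinarith [sq_nonneg (|X p.1| - |X p.2|), sq_abs (X p.1), sq_abs (X p.2),
        abs_nonneg (X p.1), abs_nonneg (X p.2)]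
    have e1 : ∫ p : Ω × Ω, |X p.1| * |X p.2| ∂(μ.prod μ) = m1 * m1 :=
      integral_prod_mul (fun ω => |X ω|) (fun ω => |X ω|)
    rw [e1, integral_div, integral_add (hint2.mul_prod (integrable_const 1))
      ((integrable_const 1).mul_prod hint2), e2a, e2b] at hmono
    linarith
  -- now conclude s ≤ B ^ 2
  rcases eq_or_lt_of_le hs0 with h0 | hpos
  · nlinarith
  · have hA : s ≤ B * m1 := by nlinarith [mul_le_mul_of_nonneg_right hmom3 hm1_0]
    nlinarith [mul_self_le_mul_self hs0 hA, mul_nonneg hB.le hm1_0]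

set_option maxHeartbeats 2000000 in
lemma tilted_var_one {Ω : Type*} [MeasurableSpace Ω] (μ : Measure Ω) [IsProbabilityMeasure μ]
    (X : Ω → ℝ) (B l : ℝ) (hB : 0 < B) (hl : 0 ≤ l) (hm : Measurable X)
    (hint : Integrable X μ) (hmean : ∫ ω, X ω ∂μ = 0) (hbdd : ∀ᵐ ω ∂μ, X ω ≤ B)
    (hint2 : Integrable (fun ω => X ω ^ 2) μ) (hint3 : Integrable (fun ω => |X ω| ^ 3) μ)
    (hmom3 : ∫ ω, |X ω| ^ 3 ∂μ ≤ B * ∫ ω, X ω ^ 2 ∂μ)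
    (hiE : Integrable (fun ω => Real.exp (l * X ω)) μ)
    (hiXE : Integrable (fun ω => X ω * Real.exp (l * X ω)) μ)
    (hiX2E : Integrable (fun ω => X ω ^ 2 * Real.exp (l * X ω)) μ) :
    max (1 - B * l) 0 * Real.exp (-(B ^ 2 * l ^ 2)) * ∫ ω, X ω ^ 2 ∂μ ≤
      (∫ ω, X ω ^ 2 * Real.exp (l * X ω) ∂μ) / (∫ ω, Real.exp (l * X ω) ∂μ)
      - ((∫ ω, X ω * Real.exp (l * X ω) ∂μ) / (∫ ω, Real.exp (l * X ω) ∂μ)) ^ 2 := by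
  set s := ∫ ω, X ω ^ 2 ∂μ with hs_def
  set f := ∫ ω, X ω ^ 2 * Real.exp (l * X ω) ∂μ with hf_def
  set g := ∫ ω, X ω * Real.exp (l * X ω) ∂μ with hg_def
  set h := ∫ ω, Real.exp (l * X ω) ∂μ with hh_def
  set m3 := ∫ ω, |X ω| ^ 3 ∂μ with hm3_def
  have hs0 : 0 ≤ s := integral_nonneg fun ω => sq_nonneg _
  have hm30 : 0 ≤ m3 := integral_nonneg fun ω => by positivity
  have iX3 : Integrable (fun ω => X ω ^ 3) μ := by
    apply hint3.mono' ((hm.pow_const 3).aestronglyMeasurable)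
    filter_upwards with ω
    rw [Real.norm_eq_abs, abs_pow]
  set k3 := ∫ ω, X ω ^ 3 ∂μ with hk3_def
  -- h ≥ 1
  have h1 : 1 ≤ h := by
    have hpt : ∀ ω, 1 + l * X ω ≤ Real.exp (l * X ω) := fun ω => by
      have := Real.add_one_le_exp (l * X ω); linarith
    have hint1 : Integrable (fun ω => 1 + l * X ω) μ :=
      (integrable_const 1).add (hint.const_mul l)
    have := integral_mono hint1 hiE hpt
    rw [integral_add (integrable_const 1) (hint.const_mul l), integral_const,
      integral_const_mul _, hmean] at this
    simpa using this
  have hpos : (0 : ℝ) < h := lt_of_lt_of_le one_pos h1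
  -- Key1 : exp (-(B*l)) * s ≤ f * h - g ^ 2
  have key1 : Real.exp (-(B * l)) * s ≤ f * h - g ^ 2 := by
    have iG : Integrable (fun p : Ω × Ω =>
        X p.1 ^ 2 * Real.exp (l * X p.1) * Real.exp (l * X p.2)
        + Real.exp (l * X p.1) * (X p.2 ^ 2 * Real.exp (l * X p.2))
        - 2 * (X p.1 * Real.exp (l * X p.1) * (X p.2 * Real.exp (l * X p.2)))) (μ.prod μ) :=
      ((hiX2E.mul_prod hiE).add (hiE.mul_prod hiX2E)).sub ((hiXE.mul_prod hiXE).const_mul 2)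
    have eG1 : ∫ p : Ω × Ω, X p.1 ^ 2 * Real.exp (l * X p.1) * Real.exp (l * X p.2) ∂(μ.prod μ)
        = f * h := integral_prod_mul (fun ω => X ω ^ 2 * Real.exp (l * X ω)) (fun ω => Real.exp (l * X ω))
    have eG2 : ∫ p : Ω × Ω, Real.exp (l * X p.1) * (X p.2 ^ 2 * Real.exp (l * X p.2)) ∂(μ.prod μ)
        = h * f := integral_prod_mul (fun ω => Real.exp (l * X ω)) (fun ω => X ω ^ 2 * Real.exp (l * X ω))
    have eG3 : ∫ p : Ω × Ω, X p.1 * Real.exp (l * X p.1) * (X p.2 * Real.exp (l * X p.2)) ∂(μ.prod μ)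
        = g * g := integral_prod_mul (fun ω => X ω * Real.exp (l * X ω)) (fun ω => X ω * Real.exp (l * X ω))
    have iA1 : Integrable (fun p : Ω × Ω =>
        X p.1 ^ 2 * Real.exp (l * X p.1) * Real.exp (l * X p.2)) (μ.prod μ) := hiX2E.mul_prod hiE
    have iA2 : Integrable (fun p : Ω × Ω =>
        Real.exp (l * X p.1) * (X p.2 ^ 2 * Real.exp (l * X p.2))) (μ.prod μ) := hiE.mul_prod hiX2E
    have iA3 : Integrable (fun p : Ω × Ω =>
        X p.1 * Real.exp (l * X p.1) * (X p.2 * Real.exp (l * X p.2))) (μ.prod μ) :=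
      hiXE.mul_prod hiXE
    have iA12 : Integrable (fun p : Ω × Ω =>
        X p.1 ^ 2 * Real.exp (l * X p.1) * Real.exp (l * X p.2)
        + Real.exp (l * X p.1) * (X p.2 ^ 2 * Real.exp (l * X p.2))) (μ.prod μ) := iA1.add iA2
    have iA3' : Integrable (fun p : Ω × Ω =>
        2 * (X p.1 * Real.exp (l * X p.1) * (X p.2 * Real.exp (l * X p.2)))) (μ.prod μ) :=
      iA3.const_mul 2
    have intG : ∫ p : Ω × Ω, (X p.1 ^ 2 * Real.exp (l * X p.1) * Real.exp (l * X p.2)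
        + Real.exp (l * X p.1) * (X p.2 ^ 2 * Real.exp (l * X p.2))
        - 2 * (X p.1 * Real.exp (l * X p.1) * (X p.2 * Real.exp (l * X p.2)))) ∂(μ.prod μ)
        = f * h + h * f - 2 * (g * g) := by
      rw [integral_sub iA12 iA3', integral_add iA1 iA2, integral_const_mul _, eG1, eG2, eG3]
    -- lower function L
    have iB1 : Integrable (fun p : Ω × Ω => X p.1 ^ 2 * (1 : ℝ)) (μ.prod μ) :=
      hint2.mul_prod (integrable_const 1)
    have iB2 : Integrable (fun p : Ω × Ω => (1 : ℝ) * X p.2 ^ 2) (μ.prod μ) :=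
      (integrable_const 1).mul_prod hint2
    have iB3 : Integrable (fun p : Ω × Ω => X p.1 * X p.2) (μ.prod μ) := hint.mul_prod hint
    have iB4 : Integrable (fun p : Ω × Ω => X p.1 ^ 3 * (1 : ℝ)) (μ.prod μ) :=
      iX3.mul_prod (integrable_const 1)
    have iB5 : Integrable (fun p : Ω × Ω => X p.1 ^ 2 * X p.2) (μ.prod μ) := hint2.mul_prod hint
    have iB6 : Integrable (fun p : Ω × Ω => (1 : ℝ) * X p.2 ^ 3) (μ.prod μ) :=
      (integrable_const 1).mul_prod iX3
    have iB7 : Integrable (fun p : Ω × Ω => X p.1 * X p.2 ^ 2) (μ.prod μ) := hint.mul_prod hint2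
    have iB12 : Integrable (fun p : Ω × Ω => X p.1 ^ 2 * (1 : ℝ) + (1 : ℝ) * X p.2 ^ 2) (μ.prod μ) :=
      iB1.add iB2
    have iB3' : Integrable (fun p : Ω × Ω => 2 * (X p.1 * X p.2)) (μ.prod μ) := iB3.const_mul 2
    have iT1 : Integrable (fun p : Ω × Ω =>
        X p.1 ^ 2 * 1 + 1 * X p.2 ^ 2 - 2 * (X p.1 * X p.2)) (μ.prod μ) := iB12.sub iB3'
    have iB45 : Integrable (fun p : Ω × Ω => X p.1 ^ 3 * 1 - X p.1 ^ 2 * X p.2) (μ.prod μ) :=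
      iB4.sub iB5
    have iB67 : Integrable (fun p : Ω × Ω => 1 * X p.2 ^ 3 - X p.1 * X p.2 ^ 2) (μ.prod μ) :=
      iB6.sub iB7
    have iT2 : Integrable (fun p : Ω × Ω =>
        X p.1 ^ 3 * 1 - X p.1 ^ 2 * X p.2 + (1 * X p.2 ^ 3 - X p.1 * X p.2 ^ 2)) (μ.prod μ) :=
      iB45.add iB67
    have iT1' : Integrable (fun p : Ω × Ω =>
        (1 + B * l) * (X p.1 ^ 2 * 1 + 1 * X p.2 ^ 2 - 2 * (X p.1 * X p.2))) (μ.prod μ) :=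
      iT1.const_mul _
    have iT2' : Integrable (fun p : Ω × Ω =>
        l * (X p.1 ^ 3 * 1 - X p.1 ^ 2 * X p.2 + (1 * X p.2 ^ 3 - X p.1 * X p.2 ^ 2))) (μ.prod μ) :=
      iT2.const_mul _
    have iT12 : Integrable (fun p : Ω × Ω =>
        (1 + B * l) * (X p.1 ^ 2 * 1 + 1 * X p.2 ^ 2 - 2 * (X p.1 * X p.2))
          + l * (X p.1 ^ 3 * 1 - X p.1 ^ 2 * X p.2 + (1 * X p.2 ^ 3 - X p.1 * X p.2 ^ 2))) (μ.prod μ) :=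
      iT1'.add iT2'
    have iL : Integrable (fun p : Ω × Ω =>
        Real.exp (-(B * l)) * ((1 + B * l) * (X p.1 ^ 2 * 1 + 1 * X p.2 ^ 2 - 2 * (X p.1 * X p.2))
          + l * (X p.1 ^ 3 * 1 - X p.1 ^ 2 * X p.2 + (1 * X p.2 ^ 3 - X p.1 * X p.2 ^ 2)))) (μ.prod μ) :=
      iT12.const_mul _
    have intL : ∫ p : Ω × Ω,
        Real.exp (-(B * l)) * ((1 + B * l) * (X p.1 ^ 2 * 1 + 1 * X p.2 ^ 2 - 2 * (X p.1 * X p.2))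
          + l * (X p.1 ^ 3 * 1 - X p.1 ^ 2 * X p.2 + (1 * X p.2 ^ 3 - X p.1 * X p.2 ^ 2))) ∂(μ.prod μ)
        = Real.exp (-(B * l)) * ((1 + B * l) * (2 * s) + l * (2 * k3)) := by
      have ea : ∫ p : Ω × Ω, X p.1 ^ 2 * (1 : ℝ) ∂(μ.prod μ) = s := by
        have := integral_prod_mul (μ := μ) (ν := μ) (fun ω => X ω ^ 2) (fun _ => (1 : ℝ))
        simpa using this
      have eb : ∫ p : Ω × Ω, (1 : ℝ) * X p.2 ^ 2 ∂(μ.prod μ) = s := by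
        have := integral_prod_mul (μ := μ) (ν := μ) (fun _ => (1 : ℝ)) (fun ω => X ω ^ 2)
        simpa using this
      have ec : ∫ p : Ω × Ω, X p.1 * X p.2 ∂(μ.prod μ) = 0 := by
        have := integral_prod_mul (μ := μ) (ν := μ) X X
        rw [hmean] at this
        simpa using this
      have ec2 : ∫ p : Ω × Ω, 2 * (X p.1 * X p.2) ∂(μ.prod μ) = 0 := by
        rw [integral_const_mul _, ec, mul_zero]
      have ed : ∫ p : Ω × Ω, X p.1 ^ 3 * (1 : ℝ) ∂(μ.prod μ) = k3 := by
        have := integral_prod_mul (μ := μ) (ν := μ) (fun ω => X ω ^ 3) (fun _ => (1 : ℝ))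
        simpa using this
      have ee : ∫ p : Ω × Ω, X p.1 ^ 2 * X p.2 ∂(μ.prod μ) = 0 := by
        have := integral_prod_mul (μ := μ) (ν := μ) (fun ω => X ω ^ 2) X
        rw [hmean] at this
        simpa using this
      have ef : ∫ p : Ω × Ω, (1 : ℝ) * X p.2 ^ 3 ∂(μ.prod μ) = k3 := by
        have := integral_prod_mul (μ := μ) (ν := μ) (fun _ => (1 : ℝ)) (fun ω => X ω ^ 3)
        simpa using this
      have eg : ∫ p : Ω × Ω, X p.1 * X p.2 ^ 2 ∂(μ.prod μ) = 0 := by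
        have := integral_prod_mul (μ := μ) (ν := μ) X (fun ω => X ω ^ 2)
        rw [hmean] at this
        simpa using this
      rw [integral_const_mul _, integral_add iT1' iT2', integral_const_mul _, integral_const_mul _,
        integral_sub iB12 iB3', integral_add iB1 iB2,
        integral_add iB45 iB67, integral_sub iB4 iB5, integral_sub iB6 iB7]
      beta_reduce
      rw [ea, eb, ec2, ed, ee, ef, eg]
      ring
    -- pointwise bound
    have hLG : (fun p : Ω × Ω =>
        Real.exp (-(B * l)) * ((1 + B * l) * (X p.1 ^ 2 * 1 + 1 * X p.2 ^ 2 - 2 * (X p.1 * X p.2))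
          + l * (X p.1 ^ 3 * 1 - X p.1 ^ 2 * X p.2 + (1 * X p.2 ^ 3 - X p.1 * X p.2 ^ 2)))) ≤
        (fun p : Ω × Ω =>
        X p.1 ^ 2 * Real.exp (l * X p.1) * Real.exp (l * X p.2)
        + Real.exp (l * X p.1) * (X p.2 ^ 2 * Real.exp (l * X p.2))
        - 2 * (X p.1 * Real.exp (l * X p.1) * (X p.2 * Real.exp (l * X p.2)))) := by
      intro p
      set a := X p.1
      set b := X p.2
      simp only
      have tangent : Real.exp (-(B * l)) * (1 + B * l + l * (a + b)) ≤ Real.exp (l * (a + b)) := by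
        have h1 := Real.add_one_le_exp (l * (a + b) + B * l)
        have h2 : Real.exp (l * (a + b)) =
            Real.exp (-(B * l)) * Real.exp (l * (a + b) + B * l) := by
          rw [← Real.exp_add]; ring_nf
        rw [h2]
        have := mul_le_mul_of_nonneg_left h1 (Real.exp_pos (-(B * l))).le
        linarith
      have hexp : Real.exp (l * a) * Real.exp (l * b) = Real.exp (l * (a + b)) := by
        rw [← Real.exp_add]; ring_nf
      have hsq : (0 : ℝ) ≤ (a - b) ^ 2 := sq_nonneg _
      have main : (a - b) ^ 2 * (Real.exp (-(B * l)) * (1 + B * l + l * (a + b)))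
          ≤ (a - b) ^ 2 * Real.exp (l * (a + b)) := mul_le_mul_of_nonneg_left tangent hsq
      calc Real.exp (-(B * l)) * ((1 + B * l) * (a ^ 2 * 1 + 1 * b ^ 2 - 2 * (a * b))
              + l * (a ^ 3 * 1 - a ^ 2 * b + (1 * b ^ 3 - a * b ^ 2)))
          = (a - b) ^ 2 * (Real.exp (-(B * l)) * (1 + B * l + l * (a + b))) := by ring
        _ ≤ (a - b) ^ 2 * Real.exp (l * (a + b)) := main
        _ = a ^ 2 * Real.exp (l * a) * Real.exp (l * b)
            + Real.exp (l * a) * (b ^ 2 * Real.exp (l * b))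
            - 2 * (a * Real.exp (l * a) * (b * Real.exp (l * b))) := by
            rw [← hexp]; ring
    have hmono := integral_mono iL iG hLG
    rw [intG, intL] at hmono
    -- k3 ≥ -(B*s)
    have hk3 : -(B * s) ≤ k3 := by
      have hpt : ∀ ω, -(|X ω| ^ 3) ≤ X ω ^ 3 := fun ω => by
        rw [← abs_pow]; exact neg_abs_le _
      have ineg : Integrable (fun ω => -(|X ω| ^ 3)) μ := hint3.neg
      have := integral_mono ineg iX3 hpt
      rw [integral_neg] at this
      linarith [hmom3]
    have hfinal : Real.exp (-(B * l)) * s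
        ≤ Real.exp (-(B * l)) * ((1 + B * l) * (2 * s) + l * (2 * k3)) / 2 := by
      have hlk : l * (-(B * s)) ≤ l * k3 := mul_le_mul_of_nonneg_left hk3 hl
      have hBls : 0 ≤ B * l * s := by positivity
      have inner : 2 * s ≤ (1 + B * l) * (2 * s) + l * (2 * k3) := by nlinarith
      have := mul_le_mul_of_nonneg_left inner (Real.exp_pos (-(B * l))).le
      linarith
    nlinarith [hmono, hfinal]
  have hfrac : f / h - (g / h) ^ 2 = (f * h - g ^ 2) / h ^ 2 := by
    have hne : h ≠ 0 := ne_of_gt hpos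
    field_simp
  rw [hfrac]
  rcases le_total (1 - B * l) 0 with hc | hc
  · rw [max_eq_right hc, zero_mul, zero_mul]
    apply div_nonneg _ (sq_nonneg h)
    nlinarith [key1, Real.exp_pos (-(B * l)), hs0]
  · rw [max_eq_left hc]
    have hu0 : 0 ≤ B * l := mul_nonneg hB.le hl
    have hu1 : B * l ≤ 1 := by linarith
    -- upper bound for h
    have hsB : s ≤ B ^ 2 := aux_s_le_B_sq μ X B hB hint hint2 hint3 hmom3
    have hhb : h ≤ 1 + (l ^ 2 * s / 2 + 2 / 9 * (l ^ 3 * m3)) := by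
      have hae : ∀ᵐ ω ∂μ, Real.exp (l * X ω)
          ≤ 1 + l * X ω + l ^ 2 * X ω ^ 2 / 2 + 2 / 9 * (l ^ 3 * |X ω| ^ 3) := by
        filter_upwards [hbdd] with ω hω
        have hx1 : l * X ω ≤ 1 := by
          have : l * X ω ≤ l * B := mul_le_mul_of_nonneg_left hω hl
          nlinarith
        have hcub := aux_exp_cubic (l * X ω) hx1
        have hmax : (max (l * X ω) 0) ^ 3 ≤ l ^ 3 * |X ω| ^ 3 := by
          have h1 : max (l * X ω) 0 ≤ |l * X ω| := max_le (le_abs_self _) (abs_nonneg _)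
          have h2 : (0 : ℝ) ≤ max (l * X ω) 0 := le_max_right _ _
          calc (max (l * X ω) 0) ^ 3 ≤ |l * X ω| ^ 3 := pow_le_pow_left₀ h2 h1 3
            _ = l ^ 3 * |X ω| ^ 3 := by rw [abs_mul, abs_of_nonneg hl, mul_pow]
        nlinarith [hcub, hmax]
      have i1 : Integrable (fun _ : Ω => (1 : ℝ)) μ := integrable_const 1
      have i2 : Integrable (fun ω => l * X ω) μ := hint.const_mul l
      have i12 : Integrable (fun ω => 1 + l * X ω) μ := i1.add i2
      have i3 : Integrable (fun ω => l ^ 2 * X ω ^ 2 / 2) μ := (hint2.const_mul _).div_const 2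
      have i123 : Integrable (fun ω => 1 + l * X ω + l ^ 2 * X ω ^ 2 / 2) μ := i12.add i3
      have i4 : Integrable (fun ω => 2 / 9 * (l ^ 3 * |X ω| ^ 3)) μ :=
        (hint3.const_mul _).const_mul _
      have := integral_mono_ae hiE (i123.add i4) hae
      simp only [Pi.add_apply] at this
      rw [integral_add i123 i4, integral_add i12 i3, integral_add i1 i2,
        integral_const_mul l X, integral_div, integral_const_mul (l ^ 2) (fun ω => X ω ^ 2),
        integral_const_mul ((2 : ℝ) / 9) (fun ω => l ^ 3 * |X ω| ^ 3),
        integral_const_mul (l ^ 3) (fun ω => |X ω| ^ 3), hmean, integral_const] at this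
      simp only [measure_univ, probReal_univ, ENNReal.toReal_one, smul_eq_mul, mul_one, mul_zero, add_zero] at this
      rw [hh_def, hs_def, hm3_def]
      linarith [this]
    have hc2 : h ≤ Real.exp ((B * l) ^ 2 / 2 + 2 / 9 * (B * l) ^ 3) := by
      have h1 : l ^ 2 * s ≤ l ^ 2 * B ^ 2 := mul_le_mul_of_nonneg_left hsB (sq_nonneg l)
      have h2 : m3 ≤ B * B ^ 2 := le_trans hmom3 (mul_le_mul_of_nonneg_left hsB hB.le)
      have h3 : l ^ 3 * m3 ≤ l ^ 3 * (B * B ^ 2) :=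
        mul_le_mul_of_nonneg_left h2 (by positivity)
      have h4 := Real.add_one_le_exp ((B * l) ^ 2 / 2 + 2 / 9 * (B * l) ^ 3)
      nlinarith [hhb]
    set u := B * l with hu_def
    have hBu : -(B ^ 2 * l ^ 2) = -(u ^ 2) := by rw [hu_def]; ring
    rw [hBu, le_div_iff₀ (by positivity : (0 : ℝ) < h ^ 2)]
    have hE2 : h ^ 2 ≤ Real.exp (u ^ 2 + 4 / 9 * u ^ 3) := by
      have hsq : h ^ 2 ≤ Real.exp (u ^ 2 / 2 + 2 / 9 * u ^ 3) ^ 2 :=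
        pow_le_pow_left₀ hpos.le hc2 2
      have : Real.exp (u ^ 2 / 2 + 2 / 9 * u ^ 3) ^ 2 = Real.exp (u ^ 2 + 4 / 9 * u ^ 3) := by
        rw [sq, ← Real.exp_add]
        ring_nf
      linarith [hsq, this.le, this.ge]
    have c0 : 0 ≤ (1 - u) * Real.exp (-(u ^ 2)) * s :=
      mul_nonneg (mul_nonneg (by linarith) (Real.exp_pos _).le) hs0
    have hxx : Real.exp (-(u ^ 2)) * Real.exp (u ^ 2 + 4 / 9 * u ^ 3)
        = Real.exp (u + 4 / 9 * u ^ 3) * Real.exp (-u) := by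
      rw [← Real.exp_add, ← Real.exp_add]
      ring_nf
    have hF := aux_F_le_one u hu0
    calc (1 - u) * Real.exp (-(u ^ 2)) * s * h ^ 2
        = ((1 - u) * Real.exp (-(u ^ 2)) * s) * h ^ 2 := by ring
      _ ≤ ((1 - u) * Real.exp (-(u ^ 2)) * s) * Real.exp (u ^ 2 + 4 / 9 * u ^ 3) :=
          mul_le_mul_of_nonneg_left hE2 c0
      _ = (Real.exp (-(u ^ 2)) * Real.exp (u ^ 2 + 4 / 9 * u ^ 3)) * ((1 - u) * s) := by ring
      _ = (Real.exp (u + 4 / 9 * u ^ 3) * Real.exp (-u)) * ((1 - u) * s) := by rw [hxx]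
      _ = ((1 - u) * Real.exp (u + 4 / 9 * u ^ 3)) * (Real.exp (-u) * s) := by ring
      _ ≤ 1 * (Real.exp (-u) * s) :=
          mul_le_mul_of_nonneg_right hF (mul_nonneg (Real.exp_pos _).le hs0)
      _ = Real.exp (-u) * s := one_mul _
      _ ≤ f * h - g ^ 2 := key1

/-- Lower bound on the tilted variance under a third-moment condition. -/
theorem tilted_variance_lower_bound {Ω : Type*} [MeasurableSpace Ω] (μ : Measure Ω)
    [IsProbabilityMeasure μ] (n : ℕ) (ξ : Fin n → Ω → ℝ) (B : ℝ) (hB : 0 < B)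
    (hmeas : ∀ i, Measurable (ξ i))
    (hindep : iIndepFun ξ μ)
    (hint : ∀ i, Integrable (ξ i) μ) (hmean : ∀ i, ∫ ω, ξ i ω ∂μ = 0)
    (hbdd : ∀ i, ∀ᵐ ω ∂μ, ξ i ω ≤ B)
    (hint2 : ∀ i, Integrable (fun ω => (ξ i ω) ^ 2) μ)
    (hint3 : ∀ i, Integrable (fun ω => |ξ i ω| ^ 3) μ)
    (hmom3 : ∀ i, ∫ ω, |ξ i ω| ^ 3 ∂μ ≤ B * ∫ ω, (ξ i ω) ^ 2 ∂μ)
    (hinte : ∀ i, ∀ l : ℝ, 0 ≤ l → Integrable (fun ω => Real.exp (l * ξ i ω)) μ)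
    (hintxe : ∀ i, ∀ l : ℝ, 0 ≤ l →
      Integrable (fun ω => ξ i ω * Real.exp (l * ξ i ω)) μ)
    (hintx2e : ∀ i, ∀ l : ℝ, 0 ≤ l →
      Integrable (fun ω => (ξ i ω) ^ 2 * Real.exp (l * ξ i ω)) μ) :
    ∀ l : ℝ, 0 ≤ l →
      max (1 - B * l) 0 * Real.exp (-(B ^ 2 * l ^ 2)) * (∑ i, ∫ ω, (ξ i ω) ^ 2 ∂μ)
        ≤ ∑ i, ((∫ ω, (ξ i ω) ^ 2 * Real.exp (l * ξ i ω) ∂μ) / (∫ ω, Real.exp (l * ξ i ω) ∂μ)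
            - ((∫ ω, ξ i ω * Real.exp (l * ξ i ω) ∂μ) / (∫ ω, Real.exp (l * ξ i ω) ∂μ)) ^ 2) := by
  intro l hl
  rw [Finset.mul_sum]
  apply Finset.sum_le_sum
  intro i _
  exact tilted_var_one μ (ξ i) B l hB hl (hmeas i) (hint i) (hmean i) (hbdd i) (hint2 i)
    (hint3 i) (hmom3 i) (hinte i l hl) (hintxe i l hl) (hintx2e i l hl)
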